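/- Let G be a finite 2-connected graph not containing K^4 or K_{2,3} as a minor and not isomorphic to K^3, and let e = uv be an edge of G not on the Hamilton cycle of G. Then the vertex of G/e obtained by contracting e is a cutvertex of G/e; in particular e is not 2-contractible. -/

import Mathlib

open SimpleGraph

universe u w

/-- `H` is a minor of `G`: pairwise disjoint nonempty connected branch sets, one per
vertex of `H`, with an edge of `G` between the branch sets of adjacent vertices of `H`. -/
def IsMinor {V : Type u} {W : Type w} (G : SimpleGraph V) (H : SimpleGraph W) : Prop :=
  ∃ B : W → Set V, (∀ x, (B x).Nonempty) ∧
    (∀ x, (G.induce (B x)).Connected) ∧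
    (Pairwise fun x y => Disjoint (B x) (B y)) ∧
    ∀ ⦃x y : W⦄, H.Adj x y → ∃ a ∈ B x, ∃ b ∈ B y, G.Adj a b

/-- The complete graph on four vertices. -/
def K4 : SimpleGraph (Fin 4) := completeGraph (Fin 4)

/-- The complete bipartite graph with parts of sizes 2 and 3. -/
def K23 : SimpleGraph (Fin 2 ⊕ Fin 3) := completeBipartiteGraph (Fin 2) (Fin 3)

/-- 2-connected: at least three vertices, and deleting any single vertex leaves a
connected graph. -/
def TwoConnected {V : Type u} (G : SimpleGraph V) : Prop :=
  3 ≤ Nat.card V ∧ ∀ v : V, (G.induce {u | u ≠ v}).Connected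

/-- The contraction `G/uv`: contract the edge `uv` onto the vertex `u`, suppressing
parallel edges. -/
def contractEdge {V : Type u} (G : SimpleGraph V) (u v : V) :
    SimpleGraph {w : V // w ≠ v} where
  Adj a b := (a : V) ≠ (b : V) ∧
    (G.Adj a b ∨ ((a : V) = u ∧ G.Adj v b) ∨ ((b : V) = u ∧ G.Adj a v))
  symm := by
    constructor
    rintro a b ⟨hne, h | ⟨ha, hb⟩ | ⟨hb, ha⟩⟩
    · exact ⟨hne.symm, Or.inl h.symm⟩
    · exact ⟨hne.symm, Or.inr (Or.inr ⟨ha, hb.symm⟩)⟩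
    · exact ⟨hne.symm, Or.inr (Or.inl ⟨hb, ha.symm⟩)⟩
  loopless := by
    constructor
    rintro a ⟨h, -⟩
    exact h rfl

lemma walk_exists_concat {V : Type u} {G : SimpleGraph V} {s t : V} (w : G.Walk s t)
    (h : s ≠ t) : ∃ (x : V) (w' : G.Walk s x) (ha : G.Adj x t), w = w'.concat ha := by
  cases w with
  | nil => exact absurd rfl h
  | cons ha w' => exact SimpleGraph.Walk.exists_cons_eq_concat ha w'

/-- crossing chords give a K4 minor -/
lemma crossing_K4 {V : Type u} [DecidableEq V] {G : SimpleGraph V} {u v x y : V}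
    (huv : G.Adj u v) (hxy : G.Adj x y)
    (q1 : G.Walk u v) (q2 : G.Walk v u)
    (hnod : (q1.support.tail ++ q2.support.tail).Nodup)
    (hx : x ∈ q1.support.tail) (hxv : x ≠ v)
    (hy : y ∈ q2.support.tail) (hyu : y ≠ u) :
    IsMinor G K4 := by
  -- basic inequalities
  have huvne : u ≠ v := huv.ne
  have hq2nn : u ∈ q2.support.tail := by
    have := q2.end_mem_support
    rw [Walk.support_eq_cons] at this
    rcases List.mem_cons.mp this with h | h
    · exact absurd h huvne
    · exact h
  have hq1v : v ∈ q1.support.tail := by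
    have := q1.end_mem_support
    rw [Walk.support_eq_cons] at this
    rcases List.mem_cons.mp this with h | h
    · exact absurd h huvne.symm
    · exact h
  have hdisj : ∀ z, z ∈ q1.support.tail → z ∈ q2.support.tail → False := by
    intro z h1 h2
    exact (List.disjoint_of_nodup_append hnod) h1 h2
  have hxu : x ≠ u := fun h => hdisj x hx (h ▸ hq2nn)
  have hyv : y ≠ v := fun h => hdisj y (h ▸ hq1v) hy
  -- split walks
  have hxs : x ∈ q1.support := List.mem_of_mem_tail hx
  have hys : y ∈ q2.support := List.mem_of_mem_tail hy
  set r1 := q1.takeUntil x hxs with hr1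
  set r2 := q1.dropUntil x hxs with hr2
  set r3 := q2.takeUntil y hys with hr3
  set r4 := q2.dropUntil y hys with hr4
  have hs1 : r1.append r2 = q1 := q1.take_spec hxs
  have hs2 : r3.append r4 = q2 := q2.take_spec hys
  obtain ⟨x1, c1, h1, hc1⟩ := walk_exists_concat r1 hxu.symm
  obtain ⟨v1, c2, h2, hc2⟩ := walk_exists_concat r2 hxv
  obtain ⟨y1, c3, h3, hc3⟩ := walk_exists_concat r3 hyv.symm
  obtain ⟨u1, c4, h4, hc4⟩ := walk_exists_concat r4 hyu
  -- support computations
  have ht1 : q1.support.tail = (c1.support.tail ++ [x]) ++ (c2.support.tail ++ [v]) := by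
    rw [← hs1, Walk.support_append, hc1, hc2, Walk.support_concat, Walk.support_concat,
      Walk.support_eq_cons c1, Walk.support_eq_cons c2]
    simp
  have ht2 : q2.support.tail = (c3.support.tail ++ [y]) ++ (c4.support.tail ++ [u]) := by
    rw [← hs2, Walk.support_append, hc3, hc4, Walk.support_concat, Walk.support_concat,
      Walk.support_eq_cons c3, Walk.support_eq_cons c4]
    simp
  -- nodup of the union of branch lists
  have hperm : List.Perm (c1.support ++ (c2.support ++ (c3.support ++ c4.support)))
      (q1.support.tail ++ q2.support.tail) := by
    rw [ht1, ht2, Walk.support_eq_cons c1, Walk.support_eq_cons c2,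
      Walk.support_eq_cons c3, Walk.support_eq_cons c4]
    rw [List.perm_iff_count]
    intro b
    simp [List.count_append, List.count_cons, -Walk.cons_tail_support]
    ring
  have hN : (c1.support ++ (c2.support ++ (c3.support ++ c4.support))).Nodup :=
    hperm.nodup_iff.mpr hnod
  obtain ⟨-, hN2, hd1⟩ := List.nodup_append'.mp hN
  obtain ⟨-, hN3, hd2⟩ := List.nodup_append'.mp hN2
  obtain ⟨-, -, hd3⟩ := List.nodup_append'.mp hN3
  have d12 : Disjoint {z | z ∈ c1.support} {z | z ∈ c2.support} :=
    Set.disjoint_left.mpr fun _ ha hb => hd1 ha (List.mem_append.mpr (Or.inl hb))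
  have d13 : Disjoint {z | z ∈ c1.support} {z | z ∈ c3.support} :=
    Set.disjoint_left.mpr fun _ ha hb =>
      hd1 ha (List.mem_append.mpr (Or.inr (List.mem_append.mpr (Or.inl hb))))
  have d14 : Disjoint {z | z ∈ c1.support} {z | z ∈ c4.support} :=
    Set.disjoint_left.mpr fun _ ha hb =>
      hd1 ha (List.mem_append.mpr (Or.inr (List.mem_append.mpr (Or.inr hb))))
  have d23 : Disjoint {z | z ∈ c2.support} {z | z ∈ c3.support} :=
    Set.disjoint_left.mpr fun _ ha hb => hd2 ha (List.mem_append.mpr (Or.inl hb))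
  have d24 : Disjoint {z | z ∈ c2.support} {z | z ∈ c4.support} :=
    Set.disjoint_left.mpr fun _ ha hb => hd2 ha (List.mem_append.mpr (Or.inr hb))
  have d34 : Disjoint {z | z ∈ c3.support} {z | z ∈ c4.support} :=
    Set.disjoint_left.mpr fun _ ha hb => hd3 ha hb
  refine ⟨![{z | z ∈ c1.support}, {z | z ∈ c2.support}, {z | z ∈ c3.support},
      {z | z ∈ c4.support}], ?_, ?_, ?_, ?_⟩
  · intro i
    fin_cases i
    · exact ⟨u, c1.start_mem_support⟩
    · exact ⟨x, c2.start_mem_support⟩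
    · exact ⟨v, c3.start_mem_support⟩
    · exact ⟨y, c4.start_mem_support⟩
  · intro i
    fin_cases i
    · exact c1.connected_induce_support
    · exact c2.connected_induce_support
    · exact c3.connected_induce_support
    · exact c4.connected_induce_support
  · intro i j hij
    fin_cases i <;> fin_cases j <;>
      first
        | exact absurd rfl hij
        | exact d12 | exact d13 | exact d14 | exact d23 | exact d24 | exact d34
        | exact d12.symm | exact d13.symm | exact d14.symm | exact d23.symm
        | exact d24.symm | exact d34.symm
  · intro i j hij
    have hne : i ≠ j := hij
    fin_cases i <;> fin_cases j <;>
      first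
        | exact absurd rfl hne
        | exact ⟨x1, c1.end_mem_support, x, c2.start_mem_support, h1⟩
        | exact ⟨x, c2.start_mem_support, x1, c1.end_mem_support, h1.symm⟩
        | exact ⟨u, c1.start_mem_support, v, c3.start_mem_support, huv⟩
        | exact ⟨v, c3.start_mem_support, u, c1.start_mem_support, huv.symm⟩
        | exact ⟨u, c1.start_mem_support, u1, c4.end_mem_support, h4.symm⟩
        | exact ⟨u1, c4.end_mem_support, u, c1.start_mem_support, h4⟩
        | exact ⟨v1, c2.end_mem_support, v, c3.start_mem_support, h2⟩
        | exact ⟨v, c3.start_mem_support, v1, c2.end_mem_support, h2.symm⟩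
        | exact ⟨x, c2.start_mem_support, y, c4.start_mem_support, hxy⟩
        | exact ⟨y, c4.start_mem_support, x, c2.start_mem_support, hxy.symm⟩
        | exact ⟨y1, c3.end_mem_support, y, c4.start_mem_support, h3⟩
        | exact ⟨y, c4.start_mem_support, y1, c3.end_mem_support, h3.symm⟩

/-- Let `G` be a finite 2-connected graph without `K⁴` or `K_{2,3}`
minors, not isomorphic to `K³`, and let `uv` be an edge not on the Hamilton cycle of
`G`. Then the vertex of `G/uv` obtained by the contraction is a cutvertex of `G/uv`;
in particular `uv` is not 2-contractible. -/
theorem stmt_15 {V : Type u} [Fintype V] [DecidableEq V] (G : SimpleGraph V) (h2 : TwoConnected G)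
    (hK4 : ¬ IsMinor G K4) (hK23 : ¬ IsMinor G K23)
    (hK3 : ¬ Nonempty (G ≃g completeGraph (Fin 3)))
    (a : V) (p : G.Walk a a) (hp : p.IsHamiltonianCycle)
    (u v : V) (huv : G.Adj u v) (he : s(u, v) ∉ p.edges) :
    ¬ ((contractEdge G u v).induce
        {w | w ≠ (⟨u, huv.ne⟩ : {w : V // w ≠ v})}).Connected ∧
      ¬ TwoConnected (contractEdge G u v) := by
  have hu : u ∈ p.support := hp.mem_support u
  have hqc : (p.rotate u hu).IsCycle := hp.isCycle.rotate hu
  set q := p.rotate u hu with hqdef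
  have hmemtail : ∀ w, w ∈ q.support.tail := by
    intro w
    have h1 : p.support.tail.count w = 1 :=
      ((Walk.isHamiltonianCycle_iff_isCycle_and_support_count_tail_eq_one).mp hp).2 w
    have hwp : w ∈ p.support.tail := List.count_pos_iff.mp (by omega)
    exact (Walk.support_rotate p u hu).mem_iff.mpr hwp
  have hqe : s(u, v) ∉ q.edges := fun h => he ((Walk.rotate_edges p u hu).mem_iff.mp h)
  have hvq : v ∈ q.support := List.mem_of_mem_tail (hmemtail v)
  set q1 := q.takeUntil v hvq with hq1def
  set q2 := q.dropUntil v hvq with hq2def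
  have hspec : q1.append q2 = q := q.take_spec hvq
  have hsplit : q.support.tail = q1.support.tail ++ q2.support.tail := by
    conv_lhs => rw [← hspec]
    rw [Walk.support_append, Walk.support_eq_cons q1]
    simp
  have hLnodup : (q1.support.tail ++ q2.support.tail).Nodup := hsplit ▸ hqc.support_nodup
  have hdisjL : ∀ z, z ∈ q1.support.tail → z ∈ q2.support.tail → False :=
    fun z h1 h2 => (List.disjoint_of_nodup_append hLnodup) h1 h2
  have hq1sub : q1.edges ⊆ q.edges := q.edges_takeUntil_subset hvq
  have hq2sub : q2.edges ⊆ q.edges := q.edges_dropUntil_subset hvq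
  have huvne : u ≠ v := huv.ne
  have hvq1 : v ∈ q1.support.tail := by
    have := q1.end_mem_support
    rw [Walk.support_eq_cons] at this
    rcases List.mem_cons.mp this with h | h
    · exact absurd h huvne.symm
    · exact h
  have huq2 : u ∈ q2.support.tail := by
    have := q2.end_mem_support
    rw [Walk.support_eq_cons] at this
    rcases List.mem_cons.mp this with h | h
    · exact absurd h huvne
    · exact h
  -- second vertices of q1 and q2
  have hnil1 : ¬ q1.Nil := Walk.not_nil_of_ne huvne
  have hnil2 : ¬ q2.Nil := Walk.not_nil_of_ne huvne.symm
  set x0 := q1.getVert 1 with hx0def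
  set y0 := q2.getVert 1 with hy0def
  have hux0 : G.Adj u x0 := Walk.adj_snd hnil1
  have hvy0 : G.Adj v y0 := Walk.adj_snd hnil2
  have hx0mem : x0 ∈ q1.support.tail := by
    rw [← q1.support_tail_of_not_nil hnil1]
    exact q1.tail.start_mem_support
  have hy0mem : y0 ∈ q2.support.tail := by
    rw [← q2.support_tail_of_not_nil hnil2]
    exact q2.tail.start_mem_support
  have hx0edge : s(u, x0) ∈ q1.edges := by
    have h := Walk.edges_cons (q1.adj_snd hnil1) q1.tail
    rw [q1.cons_tail_eq hnil1] at h
    rw [h]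
    exact List.mem_cons_self
  have hy0edge : s(v, y0) ∈ q2.edges := by
    have h := Walk.edges_cons (q2.adj_snd hnil2) q2.tail
    rw [q2.cons_tail_eq hnil2] at h
    rw [h]
    exact List.mem_cons_self
  have hx0v : x0 ≠ v := by
    intro h
    rw [h] at hx0edge
    exact hqe (hq1sub hx0edge)
  have hy0u : y0 ≠ u := by
    intro h
    apply hqe
    rw [h, Sym2.eq_swap] at hy0edge
    exact hq2sub hy0edge
  have hx0u : x0 ≠ u := fun h => hdisjL x0 hx0mem (by rw [h]; exact huq2)
  have hy0v : y0 ≠ v := fun h => hdisjL y0 (by rw [h]; exact hvq1) hy0mem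
  -- covering and separation
  have hcover : ∀ w, w ≠ u → w ≠ v →
      (w ∈ q1.support.tail ∧ w ≠ v) ∨ (w ∈ q2.support.tail ∧ w ≠ u) := by
    intro w hwu hwv
    have := hmemtail w
    rw [hsplit] at this
    rcases List.mem_append.mp this with h | h
    · exact Or.inl ⟨h, hwv⟩
    · exact Or.inr ⟨h, hwu⟩
  have hnoedge : ∀ z1 z2, z1 ∈ q1.support.tail → z1 ≠ v → z2 ∈ q2.support.tail →
      z2 ≠ u → ¬ G.Adj z1 z2 := by
    intro z1 z2 h1 h1v h2 h2u hadj
    exact hK4 (crossing_K4 huv hadj q1 q2 hLnodup h1 h1v h2 h2u)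
  -- the disconnection
  have hpart1 : ¬ ((contractEdge G u v).induce
      {w | w ≠ (⟨u, huv.ne⟩ : {w : V // w ≠ v})}).Connected := by
    intro hconn
    have hz0 : (⟨x0, hx0v⟩ : {w : V // w ≠ v}) ≠ ⟨u, huv.ne⟩ :=
      fun h => hx0u (congrArg Subtype.val h)
    have hz1 : (⟨y0, hy0v⟩ : {w : V // w ≠ v}) ≠ ⟨u, huv.ne⟩ :=
      fun h => hy0u (congrArg Subtype.val h)
    obtain ⟨wlk⟩ := hconn.preconnected ⟨⟨x0, hx0v⟩, hz0⟩ ⟨⟨y0, hy0v⟩, hz1⟩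
    have key : ∀ (za zb : {w : {w : V // w ≠ v} // w ∈ {w | w ≠ (⟨u, huv.ne⟩ : {w : V // w ≠ v})}})
        (wk : ((contractEdge G u v).induce
          {w | w ≠ (⟨u, huv.ne⟩ : {w : V // w ≠ v})}).Walk za zb),
        (za : {w : V // w ≠ v}).1 ∈ q1.support.tail →
        (zb : {w : V // w ≠ v}).1 ∈ q1.support.tail := by
      intro za zb wk
      induction wk with
      | nil => exact id
      | @cons za zm zb hadj wk ih =>
        intro hza
        apply ih
        have hadj' : (contractEdge G u v).Adj za.1 zm.1 := hadj
        obtain ⟨hne, hor⟩ := hadj'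
        have hzau : (za : {w : V // w ≠ v}).1 ≠ u := fun h => za.2 (Subtype.ext h)
        have hzmu : (zm : {w : V // w ≠ v}).1 ≠ u := fun h => zm.2 (Subtype.ext h)
        have hG : G.Adj (za : {w : V // w ≠ v}).1 (zm : {w : V // w ≠ v}).1 := by
          rcases hor with h | ⟨h, -⟩ | ⟨h, -⟩
          · exact h
          · exact absurd h hzau
          · exact absurd h hzmu
        rcases hcover (zm : {w : V // w ≠ v}).1 hzmu (zm : {w : V // w ≠ v}).2 with h | h
        · exact h.1
        · exact absurd hG (hnoedge _ _ hza (za : {w : V // w ≠ v}).2 h.1 h.2)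
    have := key _ _ wlk hx0mem
    exact hdisjL y0 this hy0mem
  exact ⟨hpart1, fun htc => hpart1 (htc.2 ⟨u, huv.ne⟩)⟩
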